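/- If a set of maximal x-components of an embedded Steiner tree contains no terminals, then the family {R(C)} of terminal sets whose root-paths pass through and return on the same side of each component C is a laminar family: for any two such components C₁, C₂, either R(C₁) ∩ R(C₂) = ∅, or one of R(C₁), R(C₂) contains the other. -/

import Mathlib

open SimpleGraph Classical

noncomputable section

/-- ℓ₁ norm on the plane. -/
def l1 (p : ℝ × ℝ) : ℝ := |p.1| + |p.2|

/-- ℓ₁ length of an embedded edge. -/
def edgeLen {V : Type*} (π : V → ℝ × ℝ) : Sym2 V → ℝ :=
  Sym2.lift ⟨fun v w => l1 (π v - π w), fun v w => by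
    simp [l1, abs_sub_comm]⟩

/-- ℓ₁ length of an embedded walk. -/
def walkLen {V : Type*} (G : SimpleGraph V) (π : V → ℝ × ℝ)
    {u v : V} (w : G.Walk u v) : ℝ :=
  (w.edges.map (edgeLen π)).sum

/-- Total ℓ₁ length of an embedded graph. -/
def cost {V : Type*} [Fintype V] (G : SimpleGraph V) [DecidableRel G.Adj]
    (π : V → ℝ × ℝ) : ℝ :=
  ∑ e ∈ G.edgeFinset, edgeLen π e


/-- An x-component of the embedding `π`: a nonempty connected set of vertices all having
the same x-coordinate. -/
def IsXComp {V : Type*} (G : SimpleGraph V) (π : V → ℝ × ℝ) (C : Set V) : Prop :=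
  C.Nonempty ∧ (G.induce C).Connected ∧ ∃ x0 : ℝ, ∀ v ∈ C, (π v).1 = x0

/-- A maximal x-component. -/
def IsMaxXComp {V : Type*} (G : SimpleGraph V) (π : V → ℝ × ℝ) (C : Set V) : Prop :=
  IsXComp G π C ∧ ∀ C', IsXComp G π C' → C ⊆ C' → C' = C

/-- Neighbors of the component `C` with strictly smaller x-coordinate. -/
def GammaLtX {V : Type*} (G : SimpleGraph V) (π : V → ℝ × ℝ) (C : Set V) : Set V :=
  {v | ∃ w ∈ C, G.Adj v w ∧ (π v).1 < (π w).1}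

/-- Neighbors of the component `C` with strictly larger x-coordinate. -/
def GammaGtX {V : Type*} (G : SimpleGraph V) (π : V → ℝ × ℝ) (C : Set V) : Set V :=
  {v | ∃ w ∈ C, G.Adj v w ∧ (π w).1 < (π v).1}

/-- `R(C)`: the terminals `t` whose root-`t` path meets `C` entering and leaving on the
same side. -/
def Rset {V : Type*} (G : SimpleGraph V) (hG : G.IsTree) (π : V → ℝ × ℝ)
    (r : V) (T : Set V) (C : Set V) : Set V :=
  {t ∈ T |
    (GammaGtX G π C ∩ {v | v ∈ (hG.existsUnique_path r t).choose.support}).ncard = 2 ∨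
    (GammaLtX G π C ∩ {v | v ∈ (hG.existsUnique_path r t).choose.support}).ncard = 2}

section AuxLemmas

variable {V : Type*} {G : SimpleGraph V}

lemma path_unique (hG : G.IsTree) {u v : V} (p q : G.Walk u v) (hp : p.IsPath) (hq : q.IsPath) :
    p = q := by
  obtain ⟨w, _, hu⟩ := hG.existsUnique_path u v
  rw [hu p hp, hu q hq]

lemma walk_in_set {C : Set V} (hconn : (G.induce C).Connected) {c c' : V}
    (hc : c ∈ C) (hc' : c' ∈ C) :
    ∃ W : G.Walk c c', W.IsPath ∧ ∀ x ∈ W.support, x ∈ C := by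
  obtain ⟨w⟩ := hconn.preconnected ⟨c, hc⟩ ⟨c', hc'⟩
  refine ⟨(w.map (SimpleGraph.Embedding.induce C).toHom).bypass, Walk.bypass_isPath _, ?_⟩
  intro x hx
  have := (w.map (SimpleGraph.Embedding.induce C).toHom).support_bypass_subset hx
  rw [Walk.support_map] at this
  obtain ⟨y, _, rfl⟩ := List.mem_map.mp this
  exact y.2

lemma reach_in_induce {S : Set V} : ∀ {a b : V} (W : G.Walk a b)
    (_ : ∀ x ∈ W.support, x ∈ S) (ha : a ∈ S) (hb : b ∈ S),
    (G.induce S).Reachable ⟨a, ha⟩ ⟨b, hb⟩ := by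
  intro a b W
  induction W with
  | nil => intro _ ha hb; rfl
  | @cons u m b h p ih =>
    intro hsup ha hb
    have hm : m ∈ S := hsup m (by simp [Walk.support_cons])
    refine Reachable.trans ?_ (ih (fun x hx => hsup x (by simp [Walk.support_cons, hx])) hm hb)
    exact Adj.reachable (by simpa using h)

/-- Structure of the unique path between two distinct neighbours of a connected set. -/
lemma pair_path_struct (hG : G.IsTree) {C : Set V} (hconn : (G.induce C).Connected)
    {x y : V} (hxy : x ≠ y) (hxC : x ∉ C) (hyC : y ∉ C)
    {cx cy : V} (hcx : cx ∈ C) (hcy : cy ∈ C) (hax : G.Adj x cx) (hay : G.Adj y cy)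
    (S : G.Walk x y) (hS : S.IsPath) :
    (∀ z ∈ S.support, z = x ∨ z = y ∨ z ∈ C) ∧ ∃ c ∈ C, c ∈ S.support := by
  obtain ⟨q, hqp, hqC⟩ := walk_in_set hconn hcx hcy
  have hyq : y ∉ q.support := fun h => hyC (hqC _ h)
  have hxq : x ∉ (q.concat hay.symm).support := by
    rw [Walk.support_concat]
    intro hmem
    rcases List.mem_append.mp hmem with h | h
    · exact hxC (hqC _ h)
    · simp at h; exact hxy h
  have hconcat : (q.concat hay.symm).IsPath := by
    rw [← Walk.isPath_reverse_iff, Walk.reverse_concat]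
    rw [Walk.cons_isPath_iff]
    exact ⟨hqp.reverse, by simpa [Walk.support_reverse] using hyq⟩
  have hpath : (Walk.cons hax (q.concat hay.symm)).IsPath := by
    rw [Walk.cons_isPath_iff]; exact ⟨hconcat, hxq⟩
  have := path_unique hG S _ hS hpath
  subst this
  constructor
  · intro z hz
    simp only [Walk.support_cons, List.mem_cons] at hz
    rcases hz with rfl | hz
    · exact Or.inl rfl
    · rw [Walk.support_concat] at hz
      rcases List.mem_append.mp hz with h | h
      · exact Or.inr (Or.inr (hqC _ h))
      · simp at h; exact Or.inr (Or.inl h)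
  · refine ⟨cx, hcx, ?_⟩
    simp [Walk.support_cons, Walk.support_concat, List.concat_eq_append,
      Walk.start_mem_support]

/-- Entry structure: a walk starting outside `C` that meets `C` has a vertex outside `C`
adjacent to `C`, reachable from the start avoiding `C`. -/
lemma ent {C : Set V} : ∀ {u v : V} (W : G.Walk u v) (_ : u ∉ C)
    (_ : ∃ c ∈ C, c ∈ W.support),
    ∃ w a, G.Adj w a ∧ a ∈ C ∧ w ∉ C ∧ w ∈ W.support ∧
      ∃ Q : G.Walk u w, (∀ x ∈ Q.support, x ∉ C) ∧ (∀ x ∈ Q.support, x ∈ W.support) := by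
  intro u v W
  induction W with
  | nil =>
    intro hu ⟨c, hcC, hc⟩
    rw [Walk.mem_support_nil_iff] at hc
    exact absurd (hc ▸ hcC) hu
  | @cons u m b h p ih =>
    intro hu hex
    by_cases hm : m ∈ C
    · exact ⟨u, m, h, hm, hu, Walk.start_mem_support _, Walk.nil,
        by simpa using hu, by simp⟩
    · have hex' : ∃ c ∈ C, c ∈ p.support := by
        obtain ⟨c, hcC, hc⟩ := hex
        simp only [Walk.support_cons, List.mem_cons] at hc
        rcases hc with rfl | hc
        · exact absurd hcC hu
        · exact ⟨c, hcC, hc⟩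
      obtain ⟨w, a, hadj, haC, hwC, hwsup, Q, hQ1, hQ2⟩ := ih hm hex'
      refine ⟨w, a, hadj, haC, hwC, by simp [Walk.support_cons, hwsup], Walk.cons h Q, ?_, ?_⟩
      · intro x hx
        simp only [Walk.support_cons, List.mem_cons] at hx
        rcases hx with rfl | hx
        · exact hu
        · exact hQ1 x hx
      · intro x hx
        simp only [Walk.support_cons, List.mem_cons] at hx ⊢
        rcases hx with rfl | hx
        · exact Or.inl rfl
        · exact Or.inr (hQ2 x hx)

/-- First-entry path: a path meeting `C` has an initial segment which is a path ending at its
first vertex of `C`. -/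
lemma first_entry {C : Set V} : ∀ {u v : V} (W : G.Walk u v) (_ : W.IsPath)
    (_ : ∃ c ∈ C, c ∈ W.support),
    ∃ a, a ∈ C ∧ ∃ Q : G.Walk u a, Q.IsPath ∧ (∀ x ∈ Q.support, x ∈ W.support) ∧
      (∀ x ∈ Q.support, x ∈ C → x = a) := by
  intro u v W
  induction W with
  | nil =>
    intro _ ⟨c, hcC, hc⟩
    rw [Walk.mem_support_nil_iff] at hc
    subst hc
    exact ⟨c, hcC, Walk.nil, Walk.IsPath.nil, by simp, by simp⟩
  | @cons u m b h p ih =>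
    intro hW hex
    by_cases hu : u ∈ C
    · exact ⟨u, hu, Walk.nil, Walk.IsPath.nil, by simp, by simp⟩
    · have hex' : ∃ c ∈ C, c ∈ p.support := by
        obtain ⟨c, hcC, hc⟩ := hex
        simp only [Walk.support_cons, List.mem_cons] at hc
        rcases hc with rfl | hc
        · exact absurd hcC hu
        · exact ⟨c, hcC, hc⟩
      have hWp : p.IsPath := ((Walk.cons_isPath_iff _ _).mp hW).1
      have hup : u ∉ p.support := ((Walk.cons_isPath_iff _ _).mp hW).2
      obtain ⟨a, haC, Q, hQp, hQsub, hQfe⟩ := ih hWp hex'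
      refine ⟨a, haC, Walk.cons h Q, ?_, ?_, ?_⟩
      · rw [Walk.cons_isPath_iff]
        exact ⟨hQp, fun hc => hup (hQsub u hc)⟩
      · intro x hx
        simp only [Walk.support_cons, List.mem_cons] at hx ⊢
        rcases hx with rfl | hx
        · exact Or.inl rfl
        · exact Or.inr (hQsub x hx)
      · intro x hx hxC
        simp only [Walk.support_cons, List.mem_cons] at hx
        rcases hx with rfl | hx
        · exact absurd hxC hu
        · exact hQfe x hx hxC

/-- Uniqueness of the first entry vertex of a connected set, over all first-entry paths from a
common root. -/
lemma canon_unique (hG : G.IsTree) {C : Set V} (hconn : (G.induce C).Connected)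
    {r a a' : V} (haC : a ∈ C) (haC' : a' ∈ C)
    (Q : G.Walk r a) (hQp : Q.IsPath) (hQfe : ∀ x ∈ Q.support, x ∈ C → x = a)
    (Q' : G.Walk r a') (hQp' : Q'.IsPath) (hQfe' : ∀ x ∈ Q'.support, x ∈ C → x = a') :
    a = a' := by
  by_contra hne
  obtain ⟨q, hqp, hqC⟩ := walk_in_set hconn haC haC'
  -- the unique a-a' path lies in C, and also inside supp Q ∪ supp Q'
  have hX := path_unique hG (Q.reverse.append Q').bypass q (Walk.bypass_isPath _) hqp
  have hsub : ∀ x ∈ q.support, x = a ∨ x = a' := by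
    intro x hx
    rw [← hX] at hx
    have hx' := Walk.support_bypass_subset _ hx
    rw [Walk.mem_support_append_iff, Walk.support_reverse, List.mem_reverse] at hx'
    have hxC : x ∈ C := hqC _ (hX ▸ hx)
    rcases hx' with h | h
    · exact Or.inl (hQfe x h hxC)
    · exact Or.inr (hQfe' x h hxC)
  -- hence a and a' are adjacent
  have hadj : G.Adj a a' := by
    cases q with
    | nil => exact absurd rfl hne
    | @cons _ m _ h rest =>
      have hm : m = a ∨ m = a' := hsub m (by simp [Walk.support_cons, Walk.start_mem_support])
      rcases hm with rfl | rfl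
      · exact absurd rfl h.ne'
      · exact h
  -- extend Q by this edge: gives the unique r-a' path, contradiction
  have ha'Q : a' ∉ Q.support := fun h => hne (hQfe a' h haC').symm
  have hconcat : (Q.concat hadj).IsPath := by
    rw [← Walk.isPath_reverse_iff, Walk.reverse_concat, Walk.cons_isPath_iff]
    exact ⟨hQp.reverse, by simpa [Walk.support_reverse] using ha'Q⟩
  have := path_unique hG (Q.concat hadj) Q' hconcat hQp'
  have haQ' : a ∈ Q'.support := by
    rw [← this, Walk.support_concat]
    exact List.mem_append.mpr (Or.inl (Walk.end_mem_support _))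
  exact hne (hQfe' a haQ' haC)

lemma takeUntil_cons {u m v x : V} (h : G.Adj u m) (p : G.Walk m v) (hx : x ∈ (Walk.cons h p).support)
    (hne : u ≠ x) (hx' : x ∈ p.support) :
    (Walk.cons h p).takeUntil x hx = Walk.cons h (p.takeUntil x hx') := by
  simp [Walk.takeUntil, hne]

/-- Comparability of positions along a walk. -/
lemma comp_takeUntil : ∀ {u v : V} (W : G.Walk u v) {x y : V} (hx : x ∈ W.support)
    (hy : y ∈ W.support),
    x ∈ (W.takeUntil y hy).support ∨ y ∈ (W.takeUntil x hx).support := by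
  intro u v W
  induction W with
  | nil =>
    intro x y hx hy
    rw [Walk.mem_support_nil_iff] at hx; subst hx
    exact Or.inl (Walk.start_mem_support _)
  | @cons u m b h p ih =>
    intro x y hx hy
    by_cases hux : u = x
    · subst hux; exact Or.inl (Walk.start_mem_support _)
    by_cases huy : u = y
    · subst huy; exact Or.inr (Walk.start_mem_support _)
    have hx' : x ∈ p.support := by
      rcases List.mem_cons.mp (by simpa [Walk.support_cons] using hx) with h' | h'
      · exact absurd h'.symm hux
      · exact h'
    have hy' : y ∈ p.support := by
      rcases List.mem_cons.mp (by simpa [Walk.support_cons] using hy) with h' | h'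
      · exact absurd h'.symm huy
      · exact h'
    rw [takeUntil_cons h p hx hux hx', takeUntil_cons h p hy huy hy']
    simp only [Walk.support_cons, List.mem_cons]
    rcases ih hx' hy' with h' | h'
    · exact Or.inl (Or.inr h')
    · exact Or.inr (Or.inr h')

lemma idx_cons_ne (a b : V) (l : List V) (h : b ≠ a) : (b :: l).idxOf a = l.idxOf a + 1 := by
  exact List.idxOf_cons_ne _ h

lemma idx_cons_self (b : V) (l : List V) : (b :: l).idxOf b = 0 := by
  exact List.idxOf_cons_eq _ rfl

/-- The middle of three vertices along a path lies on the (sub)path between the outer two. -/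
lemma between : ∀ {u v : V} (W : G.Walk u v) (_ : W.IsPath) {x y z : V} (hx : x ∈ W.support)
    (hy : y ∈ W.support) (hz : z ∈ W.support)
    (_ : W.support.idxOf x ≤ W.support.idxOf y)
    (_ : W.support.idxOf y ≤ W.support.idxOf z),
    ∃ S : G.Walk x z, S.IsPath ∧ y ∈ S.support ∧ ∀ w ∈ S.support, w ∈ W.support := by
  intro u v W
  induction W with
  | nil =>
    intro _ x y z hx hy hz _ _
    rw [Walk.mem_support_nil_iff] at hx hy hz
    subst hx; subst hy; subst hz
    exact ⟨Walk.nil, Walk.IsPath.nil, Walk.start_mem_support _, fun w hw => hw⟩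
  | @cons u m b h p ih =>
    intro hW x y z hx hy hz h1 h2
    have hWp : p.IsPath := ((Walk.cons_isPath_iff _ _).mp hW).1
    have hup : u ∉ p.support := ((Walk.cons_isPath_iff _ _).mp hW).2
    have hsup : (Walk.cons h p).support = u :: p.support := Walk.support_cons _ _
    by_cases hux : u = x
    · subst hux
      by_cases huy : u = y
      · subst huy
        exact ⟨(Walk.cons h p).takeUntil z hz, hW.takeUntil hz, Walk.start_mem_support _,
          fun w hw => Walk.support_takeUntil_subset _ hz hw⟩
      · have hy' : y ∈ p.support := by
          rcases List.mem_cons.mp (hsup ▸ hy) with h' | h'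
          · exact absurd h'.symm huy
          · exact h'
        have hiy : (Walk.cons h p).support.idxOf y = p.support.idxOf y + 1 := by
          rw [hsup, idx_cons_ne _ _ _ huy]
        have huz : u ≠ z := by
          intro he
          rw [← he] at h2
          rw [hiy, hsup, idx_cons_self] at h2
          omega
        have hz' : z ∈ p.support := by
          rcases List.mem_cons.mp (hsup ▸ hz) with h' | h'
          · exact absurd h'.symm huz
          · exact h'
        have hiz : (Walk.cons h p).support.idxOf z = p.support.idxOf z + 1 := by
          rw [hsup, idx_cons_ne _ _ _ huz]
        have hm : p.support.idxOf m = 0 := by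
          have : p.support = m :: p.support.tail := by
            rw [← Walk.support_eq_cons]
          rw [this, idx_cons_self]
        obtain ⟨S', hS'p, hS'y, hS'sub⟩ := ih hWp (Walk.start_mem_support p) hy' hz'
          (by omega) (by rw [hiy, hiz] at h2; omega)
        refine ⟨Walk.cons h S', ?_, ?_, ?_⟩
        · rw [Walk.cons_isPath_iff]
          exact ⟨hS'p, fun hc => hup (hS'sub _ hc)⟩
        · simp only [Walk.support_cons, List.mem_cons]
          exact Or.inr hS'y
        · intro w hw
          simp only [Walk.support_cons, List.mem_cons] at hw ⊢
          rcases hw with rfl | hw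
          · exact Or.inl rfl
          · exact Or.inr (hS'sub _ hw)
    · have hix : (Walk.cons h p).support.idxOf x = p.support.idxOf x + 1 := by
        have hx' : x ∈ p.support := by
          rcases List.mem_cons.mp (hsup ▸ hx) with h' | h'
          · exact absurd h'.symm hux
          · exact h'
        rw [hsup, idx_cons_ne _ _ _ hux]
      have hx' : x ∈ p.support := by
        rcases List.mem_cons.mp (hsup ▸ hx) with h' | h'
        · exact absurd h'.symm hux
        · exact h'
      have huy : u ≠ y := by
        intro he; rw [← he] at h1; rw [hix, hsup, idx_cons_self] at h1; omega
      have hy' : y ∈ p.support := by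
        rcases List.mem_cons.mp (hsup ▸ hy) with h' | h'
        · exact absurd h'.symm huy
        · exact h'
      have hiy : (Walk.cons h p).support.idxOf y = p.support.idxOf y + 1 := by
        rw [hsup, idx_cons_ne _ _ _ huy]
      have huz : u ≠ z := by
        intro he; rw [← he] at h2; rw [hiy, hsup, idx_cons_self] at h2; omega
      have hz' : z ∈ p.support := by
        rcases List.mem_cons.mp (hsup ▸ hz) with h' | h'
        · exact absurd h'.symm huz
        · exact h'
      have hiz : (Walk.cons h p).support.idxOf z = p.support.idxOf z + 1 := by
        rw [hsup, idx_cons_ne _ _ _ huz]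
      obtain ⟨S, hSp, hSy, hSsub⟩ := ih hWp hx' hy' hz'
        (by rw [hix, hiy] at h1; omega) (by rw [hiy, hiz] at h2; omega)
      refine ⟨S, hSp, hSy, fun w hw => ?_⟩
      simp only [Walk.support_cons, List.mem_cons]
      exact Or.inr (hSsub _ hw)

/-- Every neighbour of a maximal x-component lying outside it has different x-coordinate. -/
lemma nbr {π : V → ℝ × ℝ} {C : Set V} (hmax : IsMaxXComp G π C) {v c : V}
    (hvC : v ∉ C) (hc : c ∈ C) (hadj : G.Adj v c) :
    v ∈ GammaLtX G π C ∪ GammaGtX G π C := by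
  obtain ⟨⟨hne, hconn, x0, hx0⟩, hmaxp⟩ := hmax
  have hvx : (π v).1 ≠ x0 := by
    intro hvx
    have hsub : C ⊆ insert v C := Set.subset_insert _ _
    have hXC : IsXComp G π (insert v C) := by
      refine ⟨⟨v, Set.mem_insert _ _⟩, ?_, x0, ?_⟩
      · have hhub : ∀ a (ha : a ∈ insert v C),
            (G.induce (insert v C)).Reachable ⟨a, ha⟩ ⟨c, hsub hc⟩ := by
          intro a ha
          rcases ha with rfl | haC
          · exact Adj.reachable (by simpa using hadj)
          · obtain ⟨W, _, hWsup⟩ := walk_in_set hconn haC hc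
            exact reach_in_induce W (fun x hx => hsub (hWsup x hx)) (hsub haC) (hsub hc)
        haveI : Nonempty (↥(insert v C)) := ⟨⟨v, Set.mem_insert _ _⟩⟩
        refine ⟨fun a b => ?_⟩
        exact (hhub a.1 a.2).trans (hhub b.1 b.2).symm
      · intro u hu
        rcases hu with rfl | huC
        · exact hvx
        · exact hx0 u huC
    have := hmaxp _ hXC hsub
    exact hvC (this ▸ Set.mem_insert v C)
  rcases lt_or_gt_of_ne hvx with h | h
  · exact Or.inl ⟨c, hc, hadj, by rw [hx0 c hc]; exact h⟩
  · exact Or.inr ⟨c, hc, hadj, by rw [hx0 c hc]; exact h⟩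

/-- Distinct maximal x-components are disjoint. -/
lemma disj {π : V → ℝ × ℝ} {C₁ C₂ : Set V} (h1 : IsMaxXComp G π C₁) (h2 : IsMaxXComp G π C₂)
    (hne : C₁ ≠ C₂) : ∀ v, v ∈ C₁ → v ∈ C₂ → False := by
  intro v hv1 hv2
  obtain ⟨⟨hne1, hconn1, x1, hx1⟩, hmax1⟩ := h1
  obtain ⟨⟨hne2, hconn2, x2, hx2⟩, hmax2⟩ := h2
  have hsub1 : C₁ ⊆ C₁ ∪ C₂ := Set.subset_union_left
  have hsub2 : C₂ ⊆ C₁ ∪ C₂ := Set.subset_union_right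
  have hXC : IsXComp G π (C₁ ∪ C₂) := by
    refine ⟨⟨v, hsub1 hv1⟩, ?_, x1, ?_⟩
    · have hhub : ∀ a (ha : a ∈ C₁ ∪ C₂),
          (G.induce (C₁ ∪ C₂)).Reachable ⟨a, ha⟩ ⟨v, hsub1 hv1⟩ := by
        intro a ha
        rcases ha with haC | haC
        · obtain ⟨W, _, hWsup⟩ := walk_in_set hconn1 haC hv1
          exact reach_in_induce W (fun x hx => hsub1 (hWsup x hx)) (hsub1 haC) (hsub1 hv1)
        · obtain ⟨W, _, hWsup⟩ := walk_in_set hconn2 haC hv2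
          exact reach_in_induce W (fun x hx => hsub2 (hWsup x hx)) (hsub2 haC) (hsub1 hv1)
      haveI : Nonempty (↥(C₁ ∪ C₂)) := ⟨⟨v, hsub1 hv1⟩⟩
      exact ⟨fun a b => (hhub a.1 a.2).trans (hhub b.1 b.2).symm⟩
    · have hx12 : x1 = x2 := by rw [← hx1 v hv1, hx2 v hv2]
      intro u hu
      rcases hu with huC | huC
      · exact hx1 u huC
      · rw [hx12]; exact hx2 u huC
  have e1 := hmax1 _ hXC hsub1
  have e2 := hmax2 _ hXC hsub2
  exact hne (e1.symm.trans e2)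

lemma gammaN {π : V → ℝ × ℝ} {C : Set V} (hx0 : ∃ x0 : ℝ, ∀ v ∈ C, (π v).1 = x0) :
    ∀ v ∈ GammaLtX G π C ∪ GammaGtX G π C, v ∉ C ∧ ∃ c ∈ C, G.Adj v c := by
  obtain ⟨x0, hx0⟩ := hx0
  rintro v (⟨w, hw, hadj, hlt⟩ | ⟨w, hw, hadj, hlt⟩) <;>
    exact ⟨fun hvC => absurd (by rw [hx0 v hvC, hx0 w hw]) (ne_of_lt hlt), w, hw, hadj⟩

lemma no_three_aux (hG : G.IsTree) {C N : Set V}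
    (hconn : (G.induce C).Connected) (hN : ∀ v ∈ N, v ∉ C ∧ ∃ c ∈ C, G.Adj v c)
    {u v' : V} (W : G.Walk u v') (hW : W.IsPath) {x y z : V}
    (hxN : x ∈ N) (hyN : y ∈ N) (hzN : z ∈ N)
    (hxs : x ∈ W.support) (hys : y ∈ W.support) (hzs : z ∈ W.support)
    (hxy : x ≠ y) (hxz : x ≠ z) (hyz : y ≠ z)
    (h1 : W.support.idxOf x ≤ W.support.idxOf y)
    (h2 : W.support.idxOf y ≤ W.support.idxOf z) : False := by
  obtain ⟨S, hSp, hSy, -⟩ := between W hW hxs hys hzs h1 h2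
  obtain ⟨hxC, cx, hcx, hax⟩ := hN x hxN
  obtain ⟨hzC, cz, hcz, haz⟩ := hN z hzN
  obtain ⟨hstruct, -⟩ := pair_path_struct hG hconn hxz hxC hzC hcx hcz hax haz S hSp
  rcases hstruct y hSy with h | h | h
  · exact hxy h.symm
  · exact hyz h
  · exact (hN y hyN).1 h

lemma no_three (hG : G.IsTree) {C N : Set V}
    (hconn : (G.induce C).Connected) (hN : ∀ v ∈ N, v ∉ C ∧ ∃ c ∈ C, G.Adj v c)
    {u v' : V} (W : G.Walk u v') (hW : W.IsPath) {x y z : V}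
    (hxN : x ∈ N) (hyN : y ∈ N) (hzN : z ∈ N)
    (hxs : x ∈ W.support) (hys : y ∈ W.support) (hzs : z ∈ W.support)
    (hxy : x ≠ y) (hxz : x ≠ z) (hyz : y ≠ z) : False := by
  rcases le_total (W.support.idxOf x) (W.support.idxOf y) with h1 | h1 <;>
    rcases le_total (W.support.idxOf y) (W.support.idxOf z) with h2 | h2 <;>
    rcases le_total (W.support.idxOf x) (W.support.idxOf z) with h3 | h3
  · exact no_three_aux hG hconn hN W hW hxN hyN hzN hxs hys hzs hxy hxz hyz h1 h2
  · exact no_three_aux hG hconn hN W hW hxN hyN hzN hxs hys hzs hxy hxz hyz h1 h2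
  · exact no_three_aux hG hconn hN W hW hxN hzN hyN hxs hzs hys hxz hxy hyz.symm h3 h2
  · exact no_three_aux hG hconn hN W hW hzN hxN hyN hzs hxs hys hxz.symm hyz.symm hxy h3 h1
  · exact no_three_aux hG hconn hN W hW hyN hxN hzN hys hxs hzs hxy.symm hyz hxz h1 h3
  · exact no_three_aux hG hconn hN W hW hyN hzN hxN hys hzs hxs hyz hxy.symm hxz.symm h2 h3
  · exact no_three_aux hG hconn hN W hW hzN hyN hxN hzs hys hxs hyz.symm hxz.symm hxy.symm h2 h1
  · exact no_three_aux hG hconn hN W hW hzN hyN hxN hzs hys hxs hyz.symm hxz.symm hxy.symm h2 h1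

lemma meets_of_pair (hG : G.IsTree) {C N : Set V}
    (hconn : (G.induce C).Connected) (hN : ∀ v ∈ N, v ∉ C ∧ ∃ c ∈ C, G.Adj v c)
    {u v' : V} (W : G.Walk u v') (hW : W.IsPath) {x y : V}
    (hxN : x ∈ N) (hyN : y ∈ N) (hxy : x ≠ y)
    (hxs : x ∈ W.support) (hys : y ∈ W.support) : ∃ c ∈ C, c ∈ W.support := by
  obtain ⟨hxC, cx, hcx, hax⟩ := hN x hxN
  obtain ⟨hyC, cy, hcy, hay⟩ := hN y hyN
  rcases le_total (W.support.idxOf x) (W.support.idxOf y) with h | h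
  · obtain ⟨S, hSp, -, hSsub⟩ := between W hW hxs hxs hys le_rfl h
    obtain ⟨-, c, hcC, hcS⟩ := pair_path_struct hG hconn hxy hxC hyC hcx hcy hax hay S hSp
    exact ⟨c, hcC, hSsub c hcS⟩
  · obtain ⟨S, hSp, -, hSsub⟩ := between W hW hys hys hxs le_rfl h
    obtain ⟨-, c, hcC, hcS⟩ := pair_path_struct hG hconn hxy.symm hyC hxC hcy hcx hay hax S hSp
    exact ⟨c, hcC, hSsub c hcS⟩

/-- If the walk to some element of `Rset C` passes through `C` within the canonical entry path
of `C'`, then `Rset C' ⊆ Rset C`. -/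
lemma transfer (hG : G.IsTree) (π : V → ℝ × ℝ) (r : V) (T : Set V) {C C' : Set V}
    (hmaxC : IsMaxXComp G π C) (hmaxC' : IsMaxXComp G π C')
    (hdisj : ∀ v, v ∈ C → v ∈ C' → False)
    (hrC : r ∉ C) (hrC' : r ∉ C')
    {a₁ : V} (ha₁ : a₁ ∈ C') (Q₁ : G.Walk r a₁) (hQ₁p : Q₁.IsPath)
    (hQ₁fe : ∀ x ∈ Q₁.support, x ∈ C' → x = a₁)
    (hQ₁C : ∃ c ∈ C, c ∈ Q₁.support)
    {t : V} (ht : t ∈ Rset G hG π r T C)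
    (hQ₁P : ∀ x ∈ Q₁.support, x ∈ (hG.existsUnique_path r t).choose.support) :
    Rset G hG π r T C' ⊆ Rset G hG π r T C := by
  set P := (hG.existsUnique_path r t).choose with hP
  have hPp : P.IsPath := (hG.existsUnique_path r t).choose_spec.1
  have hconnC : (G.induce C).Connected := hmaxC.1.2.1
  have hconnC' : (G.induce C').Connected := hmaxC'.1.2.1
  have hNC := gammaN (G := G) hmaxC.1.2.2
  have hNC' := gammaN (G := G) hmaxC'.1.2.2
  -- entry and exit neighbours of C along Q₁
  obtain ⟨u₁, a, hadjua, haC, hu₁C, hu₁Q, A, hA1, hA2⟩ := ent Q₁ hrC hQ₁C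
  have ha₁C : a₁ ∉ C := fun h => hdisj a₁ h ha₁
  have hQ₁Crev : ∃ c ∈ C, c ∈ Q₁.reverse.support := by
    obtain ⟨c, hcC, hc⟩ := hQ₁C
    exact ⟨c, hcC, by simpa [Walk.support_reverse] using hc⟩
  obtain ⟨w', aw, hadjw, hawC, hw'C, hw'Qr, B, hB1, hB2⟩ := ent Q₁.reverse ha₁C hQ₁Crev
  have hw'Q : w' ∈ Q₁.support := by simpa [Walk.support_reverse] using hw'Qr
  have hu₁w' : u₁ ≠ w' := by
    intro he
    subst he
    have hbp := path_unique hG (A.append B.reverse).bypass Q₁ (Walk.bypass_isPath _) hQ₁p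
    obtain ⟨c, hcC, hcQ⟩ := hQ₁C
    rw [← hbp] at hcQ
    have := Walk.support_bypass_subset _ hcQ
    rw [Walk.mem_support_append_iff] at this
    rcases this with h | h
    · exact hA1 c h hcC
    · exact hB1 c (by simpa [Walk.support_reverse] using h) hcC
  have hu₁Γ : u₁ ∈ GammaLtX G π C ∪ GammaGtX G π C := nbr hmaxC hu₁C haC hadjua
  have hw'Γ : w' ∈ GammaLtX G π C ∪ GammaGtX G π C := nbr hmaxC hw'C hawC hadjw
  have hu₁P : u₁ ∈ P.support := hQ₁P _ hu₁Q
  have hw'P : w' ∈ P.support := hQ₁P _ hw'Q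
  -- now transfer to an arbitrary element of Rset C'
  intro t' ht'
  set P' := (hG.existsUnique_path r t').choose with hP'
  have hP'p : P'.IsPath := (hG.existsUnique_path r t').choose_spec.1
  have hmeet' : ∃ c ∈ C', c ∈ P'.support := by
    rcases ht'.2 with h | h
    · obtain ⟨x, y, hxy, hset⟩ := Set.ncard_eq_two.mp h
      have hx : x ∈ GammaGtX G π C' ∩ {v | v ∈ P'.support} := by
        rw [hset]; exact Set.mem_insert _ _
      have hy : y ∈ GammaGtX G π C' ∩ {v | v ∈ P'.support} := by
        rw [hset]; exact Set.mem_insert_of_mem _ rfl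
      exact meets_of_pair hG hconnC' hNC' P' hP'p (Or.inr hx.1) (Or.inr hy.1) hxy hx.2 hy.2
    · obtain ⟨x, y, hxy, hset⟩ := Set.ncard_eq_two.mp h
      have hx : x ∈ GammaLtX G π C' ∩ {v | v ∈ P'.support} := by
        rw [hset]; exact Set.mem_insert _ _
      have hy : y ∈ GammaLtX G π C' ∩ {v | v ∈ P'.support} := by
        rw [hset]; exact Set.mem_insert_of_mem _ rfl
      exact meets_of_pair hG hconnC' hNC' P' hP'p (Or.inl hx.1) (Or.inl hy.1) hxy hx.2 hy.2
  obtain ⟨a'', ha''C', Q'', hQ''p, hQ''sub, hQ''fe⟩ := first_entry P' hP'p hmeet'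
  have haa : a₁ = a'' := canon_unique hG hconnC' ha₁ ha''C' Q₁ hQ₁p hQ₁fe Q'' hQ''p hQ''fe
  subst haa
  have hQeq : Q₁ = Q'' := path_unique hG Q₁ Q'' hQ₁p hQ''p
  have hQ₁P' : ∀ x ∈ Q₁.support, x ∈ P'.support := fun x hx => hQ''sub x (hQeq ▸ hx)
  have hu₁P' : u₁ ∈ P'.support := hQ₁P' _ hu₁Q
  have hw'P' : w' ∈ P'.support := hQ₁P' _ hw'Q
  -- generic side transfer
  have side : ∀ s : Set V, s ⊆ GammaLtX G π C ∪ GammaGtX G π C →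
      (s ∩ {v | v ∈ P.support}).ncard = 2 → (s ∩ {v | v ∈ P'.support}).ncard = 2 := by
    intro s hsub h2
    obtain ⟨w₁, w₂, hw12, hset⟩ := Set.ncard_eq_two.mp h2
    have hw₁ : w₁ ∈ s ∩ {v | v ∈ P.support} := by rw [hset]; exact Set.mem_insert _ _
    have hw₂ : w₂ ∈ s ∩ {v | v ∈ P.support} := by rw [hset]; exact Set.mem_insert_of_mem _ rfl
    have hu₁mem : u₁ = w₁ ∨ u₁ = w₂ := by
      by_contra hcon
      push_neg at hcon
      exact no_three hG hconnC hNC P hPp hu₁Γ (hsub hw₁.1) (hsub hw₂.1)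
        hu₁P hw₁.2 hw₂.2 hcon.1 hcon.2 hw12
    have hw'mem : w' = w₁ ∨ w' = w₂ := by
      by_contra hcon
      push_neg at hcon
      exact no_three hG hconnC hNC P hPp hw'Γ (hsub hw₁.1) (hsub hw₂.1)
        hw'P hw₁.2 hw₂.2 hcon.1 hcon.2 hw12
    have hpq : ({u₁, w'} : Set V) = {w₁, w₂} := by
      rcases hu₁mem with rfl | rfl <;> rcases hw'mem with rfl | rfl
      · exact absurd rfl hu₁w'
      · rfl
      · exact Set.pair_comm _ _
      · exact absurd rfl hu₁w'
    have hmemP' : ∀ v ∈ ({w₁, w₂} : Set V), v ∈ P'.support := by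
      rw [← hpq]
      intro v hv
      rcases hv with rfl | hv
      · exact hu₁P'
      · rcases hv with rfl
        exact hw'P'
    have hw₁P' : w₁ ∈ P'.support := hmemP' _ (Set.mem_insert _ _)
    have hw₂P' : w₂ ∈ P'.support := hmemP' _ (Set.mem_insert_of_mem _ rfl)
    have hsetP' : s ∩ {v | v ∈ P'.support} = {w₁, w₂} := by
      ext v
      constructor
      · intro hv
        by_contra hcon
        simp only [Set.mem_insert_iff, Set.mem_singleton_iff] at hcon
        push_neg at hcon
        exact no_three hG hconnC hNC P' hP'p (hsub hv.1) (hsub hw₁.1) (hsub hw₂.1)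
          hv.2 hw₁P' hw₂P' hcon.1 hcon.2 hw12
      · intro hv
        rcases hv with rfl | hv
        · exact ⟨hw₁.1, hw₁P'⟩
        · rcases hv with rfl
          exact ⟨hw₂.1, hw₂P'⟩
    rw [hsetP']
    exact Set.ncard_pair hw12
  refine ⟨ht'.1, ?_⟩
  rcases ht.2 with h | h
  · exact Or.inl (side _ Set.subset_union_right h)
  · exact Or.inr (side _ Set.subset_union_left h)

end AuxLemmas

lemma rset_meets (hG : G.IsTree) {π : V → ℝ × ℝ} {r : V} {T C : Set V}
    (hmax : IsMaxXComp G π C) {t : V} (ht : t ∈ Rset G hG π r T C) :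
    ∃ c ∈ C, c ∈ (hG.existsUnique_path r t).choose.support := by
  set P := (hG.existsUnique_path r t).choose with hP
  have hPp : P.IsPath := (hG.existsUnique_path r t).choose_spec.1
  have hN := gammaN (G := G) hmax.1.2.2
  have hconn := hmax.1.2.1
  rcases ht.2 with h | h
  · obtain ⟨x, y, hxy, hset⟩ := Set.ncard_eq_two.mp h
    have hx : x ∈ GammaGtX G π C ∩ {v | v ∈ P.support} := by
      rw [hset]; exact Set.mem_insert _ _
    have hy : y ∈ GammaGtX G π C ∩ {v | v ∈ P.support} := by
      rw [hset]; exact Set.mem_insert_of_mem _ rfl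
    exact meets_of_pair hG hconn hN P hPp (Or.inr hx.1) (Or.inr hy.1) hxy hx.2 hy.2
  · obtain ⟨x, y, hxy, hset⟩ := Set.ncard_eq_two.mp h
    have hx : x ∈ GammaLtX G π C ∩ {v | v ∈ P.support} := by
      rw [hset]; exact Set.mem_insert _ _
    have hy : y ∈ GammaLtX G π C ∩ {v | v ∈ P.support} := by
      rw [hset]; exact Set.mem_insert_of_mem _ rfl
    exact meets_of_pair hG hconn hN P hPp (Or.inl hx.1) (Or.inl hy.1) hxy hx.2 hy.2

theorem stmt_15 {V : Type*} [Fintype V] (G : SimpleGraph V) (hG : G.IsTree)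
    (T : Set V) (r : V) (hr : r ∈ T) (π : V → ℝ × ℝ)
    (Δ : Set (Set V)) (hΔ : ∀ C ∈ Δ, IsMaxXComp G π C ∧ C ∩ T = ∅) :
    ∀ C₁ ∈ Δ, ∀ C₂ ∈ Δ,
      Rset G hG π r T C₁ ⊆ Rset G hG π r T C₂ ∨
      Rset G hG π r T C₂ ⊆ Rset G hG π r T C₁ ∨
      Rset G hG π r T C₁ ∩ Rset G hG π r T C₂ = ∅ := by
  intro C₁ hC₁ C₂ hC₂
  obtain ⟨hmax₁, hT₁⟩ := hΔ C₁ hC₁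
  obtain ⟨hmax₂, hT₂⟩ := hΔ C₂ hC₂
  by_cases hCC : C₁ = C₂
  · subst hCC; exact Or.inl subset_rfl
  have hdisj12 : ∀ v, v ∈ C₁ → v ∈ C₂ → False := disj hmax₁ hmax₂ hCC
  have hr₁ : r ∉ C₁ := fun h => Set.eq_empty_iff_forall_notMem.mp hT₁ r ⟨h, hr⟩
  have hr₂ : r ∉ C₂ := fun h => Set.eq_empty_iff_forall_notMem.mp hT₂ r ⟨h, hr⟩
  by_cases hE : Rset G hG π r T C₁ ∩ Rset G hG π r T C₂ = ∅
  · exact Or.inr (Or.inr hE)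
  obtain ⟨t, ht₁, ht₂⟩ := Set.nonempty_iff_ne_empty.mpr hE
  set P := (hG.existsUnique_path r t).choose with hP
  have hPp : P.IsPath := (hG.existsUnique_path r t).choose_spec.1
  obtain ⟨a₁, ha₁C, Q₁, hQ₁p, hQ₁sub, hQ₁fe⟩ := first_entry P hPp (rset_meets hG hmax₁ ht₁)
  obtain ⟨a₂, ha₂C, Q₂, hQ₂p, hQ₂sub, hQ₂fe⟩ := first_entry P hPp (rset_meets hG hmax₂ ht₂)
  have ha₁P : a₁ ∈ P.support := hQ₁sub _ (Walk.end_mem_support _)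
  have ha₂P : a₂ ∈ P.support := hQ₂sub _ (Walk.end_mem_support _)
  have hTU₁ : P.takeUntil a₁ ha₁P = Q₁ :=
    path_unique hG _ _ (hPp.takeUntil ha₁P) hQ₁p
  have hTU₂ : P.takeUntil a₂ ha₂P = Q₂ :=
    path_unique hG _ _ (hPp.takeUntil ha₂P) hQ₂p
  rcases comp_takeUntil P ha₂P ha₁P with horient | horient
  · -- C₂ is entered within the entry path of C₁ : Rset C₁ ⊆ Rset C₂
    rw [hTU₁] at horient
    exact Or.inl (transfer hG π r T hmax₂ hmax₁ (fun v h2 h1 => hdisj12 v h1 h2) hr₂ hr₁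
      ha₁C Q₁ hQ₁p hQ₁fe ⟨a₂, ha₂C, horient⟩ ht₂ hQ₁sub)
  · rw [hTU₂] at horient
    exact Or.inr (Or.inl (transfer hG π r T hmax₁ hmax₂ hdisj12 hr₁ hr₂
      ha₂C Q₂ hQ₂p hQ₂fe ⟨a₁, ha₁C, horient⟩ ht₁ hQ₂sub))
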